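/- Let Ω be a finite set and let ν assign a nonnegative real ν(S) to each nonempty subset S ⊆ Ω. Define μ : P(Ω) → ℝ by μ(A) = Σ_{S ⊆ A, S ≠ ∅} ν(S) (so that μ is the q-measure obtained by transferring along the multiplicative coevents S* given by S*(A) = 1 iff S ⊆ A). If μ is grade-2 additive, then ν(S) = 0 for every subset S with at least 3 elements; that is, ν vanishes except on multiplicative coevents that are quadratic. -/

import Mathlib

def Grade2Additive {Ω : Type*} [DecidableEq Ω] (μ : Finset Ω → ℝ) : Prop :=
  ∀ A B C : Finset Ω, Disjoint A B → Disjoint A C → Disjoint B C →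
    μ (A ∪ B ∪ C) = μ (A ∪ B) + μ (A ∪ C) + μ (B ∪ C) - μ A - μ B - μ C

/-- If the q-measure obtained by transferring nonnegative weights along the
multiplicative coevents is grade-2 additive, then the weight of every subset
with at least three elements vanishes. -/
theorem transfer_multiplicative_forces_quadratic {Ω : Type*} [Fintype Ω] [DecidableEq Ω]
    (ν : Finset Ω → ℝ) (hν : ∀ S : Finset Ω, S ≠ ∅ → 0 ≤ ν S)
    (hμ : Grade2Additive (fun A : Finset Ω =>
      ∑ S ∈ A.powerset.filter (· ≠ ∅), ν S)) :
    ∀ S : Finset Ω, 3 ≤ S.card → ν S = 0 := by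
  classical
  intro S hS
  obtain ⟨a, ha⟩ := Finset.card_pos.mp (by omega : 0 < S.card)
  obtain ⟨b, hb⟩ := Finset.card_pos.mp (show 0 < (S.erase a).card by
    rw [Finset.card_erase_of_mem ha]; omega)
  have hab : a ≠ b := (Finset.ne_of_mem_erase hb).symm
  have hbS : b ∈ S := Finset.mem_of_mem_erase hb
  set A : Finset Ω := {a} with hA
  set B : Finset Ω := {b} with hB
  set C : Finset Ω := S \ {a, b} with hC
  have hUnion : A ∪ B ∪ C = S := by
    ext x
    simp only [hA, hB, hC, Finset.mem_union, Finset.mem_singleton, Finset.mem_sdiff,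
      Finset.mem_insert]
    constructor
    · rintro ((rfl | rfl) | ⟨hx, _⟩) <;> assumption
    · intro hx
      by_cases hxa : x = a
      · tauto
      by_cases hxb : x = b <;> tauto
  have hdAB : Disjoint A B := by simp [hA, hB, hab.symm, hab]
  have hdAC : Disjoint A C := by
    simp [hA, hC, Finset.disjoint_singleton_left]
  have hdBC : Disjoint B C := by
    simp [hB, hC, Finset.disjoint_singleton_left]
  have hAS : A ⊆ S := by simp [hA, ha]
  have hBS : B ⊆ S := by simp [hB, hbS]
  have hCS : C ⊆ S := Finset.sdiff_subset
  have hABS : A ∪ B ⊆ S := Finset.union_subset hAS hBS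
  have hACS : A ∪ C ⊆ S := Finset.union_subset hAS hCS
  have hBCS : B ∪ C ⊆ S := Finset.union_subset hBS hCS
  have E := hμ A B C hdAB hdAC hdBC
  simp only [hUnion] at E
  set D : Finset (Finset Ω) := S.powerset.filter (· ≠ ∅) with hD
  have key : ∀ X : Finset Ω, X ⊆ S →
      ∑ T ∈ X.powerset.filter (· ≠ ∅), ν T
        = ∑ T ∈ D, if T ⊆ X then ν T else 0 := by
    intro X hX
    have hfil : D.filter (· ⊆ X) = X.powerset.filter (· ≠ ∅) := by
      ext T
      simp only [hD, Finset.mem_filter, Finset.mem_powerset]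
      constructor
      · rintro ⟨⟨_, h2⟩, h3⟩; exact ⟨h3, h2⟩
      · rintro ⟨h1, h2⟩; exact ⟨⟨h1.trans hX, h2⟩, h1⟩
    rw [← hfil, Finset.sum_filter]
  rw [key _ hABS, key _ hACS, key _ hBCS, key _ hAS, key _ hBS, key _ hCS] at E
  have E2 : ∑ T ∈ D, (ν T + (if T ⊆ A then ν T else 0) + (if T ⊆ B then ν T else 0)
      + (if T ⊆ C then ν T else 0) - (if T ⊆ A ∪ B then ν T else 0)
      - (if T ⊆ A ∪ C then ν T else 0) - (if T ⊆ B ∪ C then ν T else 0)) = 0 := by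
    simp only [Finset.sum_sub_distrib, Finset.sum_add_distrib]
    linarith [E]
  have hnonneg : ∀ T ∈ D, 0 ≤ ν T + (if T ⊆ A then ν T else 0) + (if T ⊆ B then ν T else 0)
      + (if T ⊆ C then ν T else 0) - (if T ⊆ A ∪ B then ν T else 0)
      - (if T ⊆ A ∪ C then ν T else 0) - (if T ⊆ B ∪ C then ν T else 0) := by
    intro T hT
    rw [hD, Finset.mem_filter, Finset.mem_powerset] at hT
    obtain ⟨hTS, hTne⟩ := hT
    have hνT : 0 ≤ ν T := hν T hTne
    by_cases hpa : a ∈ T <;> by_cases hpb : b ∈ T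
    · -- a ∈ T, b ∈ T
      have hnAC : ¬ T ⊆ A ∪ C := fun h => by
        have := h hpb
        simp [hA, hC, hab.symm] at this
      have hnBC : ¬ T ⊆ B ∪ C := fun h => by
        have := h hpa
        simp [hB, hC, hab] at this
      have hnA : ¬ T ⊆ A := fun h => by have := h hpb; simp [hA, hab.symm] at this
      have hnB : ¬ T ⊆ B := fun h => by have := h hpa; simp [hB, hab] at this
      have hnC : ¬ T ⊆ C := fun h => by have := h hpa; simp [hC] at this
      by_cases hq : T ⊆ A ∪ B <;> simp [hq, hnAC, hnBC, hnA, hnB, hnC, hνT]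
    · -- a ∈ T, b ∉ T
      have hAC : T ⊆ A ∪ C := by
        intro x hx
        by_cases hxa : x = a
        · simp [hA, hxa]
        · have hxb : x ≠ b := fun h => hpb (h ▸ hx)
          simp only [Finset.mem_union, hC, Finset.mem_sdiff, Finset.mem_insert,
            Finset.mem_singleton]
          exact Or.inr ⟨hTS hx, by tauto⟩
      have hnBC : ¬ T ⊆ B ∪ C := fun h => by
        have := h hpa
        simp [hB, hC, hab] at this
      have hnB : ¬ T ⊆ B := fun h => by have := h hpa; simp [hB, hab] at this
      have hnC : ¬ T ⊆ C := fun h => by have := h hpa; simp [hC] at this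
      by_cases hq : T ⊆ A ∪ B
      · have hqA : T ⊆ A := by
          intro x hx
          have := hq hx
          simp only [Finset.mem_union, hA, hB, Finset.mem_singleton] at this ⊢
          rcases this with h | h
          · exact h
          · exact absurd (h ▸ hx) hpb
        simp [hq, hqA, hAC, hnBC, hnB, hnC]
      · have hnA : ¬ T ⊆ A := fun h => hq (h.trans Finset.subset_union_left)
        simp [hq, hnA, hAC, hnBC, hnB, hnC]
    · -- a ∉ T, b ∈ T
      have hBC : T ⊆ B ∪ C := by
        intro x hx
        by_cases hxb : x = b
        · simp [hB, hxb]
        · have hxa : x ≠ a := fun h => hpa (h ▸ hx)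
          simp only [Finset.mem_union, hC, Finset.mem_sdiff, Finset.mem_insert,
            Finset.mem_singleton]
          exact Or.inr ⟨hTS hx, by tauto⟩
      have hnAC : ¬ T ⊆ A ∪ C := fun h => by
        have := h hpb
        simp [hA, hC, hab.symm] at this
      have hnA : ¬ T ⊆ A := fun h => by have := h hpb; simp [hA, hab.symm] at this
      have hnC : ¬ T ⊆ C := fun h => by have := h hpb; simp [hC] at this
      by_cases hq : T ⊆ A ∪ B
      · have hqB : T ⊆ B := by
          intro x hx
          have := hq hx
          simp only [Finset.mem_union, hA, hB, Finset.mem_singleton] at this ⊢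
          rcases this with h | h
          · exact absurd (h ▸ hx) hpa
          · exact h
        simp [hq, hqB, hBC, hnAC, hnA, hnC]
      · have hnB : ¬ T ⊆ B := fun h => hq (h.trans Finset.subset_union_right)
        simp [hq, hnB, hBC, hnAC, hnA, hnC]
    · -- a ∉ T, b ∉ T
      have hTC : T ⊆ C := by
        intro x hx
        have hxa : x ≠ a := fun h => hpa (h ▸ hx)
        have hxb : x ≠ b := fun h => hpb (h ▸ hx)
        simp only [hC, Finset.mem_sdiff, Finset.mem_insert, Finset.mem_singleton]
        exact ⟨hTS hx, by tauto⟩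
      have hAC : T ⊆ A ∪ C := hTC.trans Finset.subset_union_right
      have hBC : T ⊆ B ∪ C := hTC.trans Finset.subset_union_right
      obtain ⟨x, hx⟩ := Finset.nonempty_iff_ne_empty.mpr hTne
      have hnAB : ¬ T ⊆ A ∪ B := fun h => by
        have := h hx
        simp only [Finset.mem_union, hA, hB, Finset.mem_singleton] at this
        rcases this with h | h
        · exact hpa (h ▸ hx)
        · exact hpb (h ▸ hx)
      have hnA : ¬ T ⊆ A := fun h => hnAB (h.trans Finset.subset_union_left)
      have hnB : ¬ T ⊆ B := fun h => hnAB (h.trans Finset.subset_union_right)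
      simp [hTC, hAC, hBC, hnAB, hnA, hnB]
  have hall := (Finset.sum_eq_zero_iff_of_nonneg hnonneg).mp E2
  have hSD : S ∈ D := by
    rw [hD, Finset.mem_filter, Finset.mem_powerset]
    refine ⟨le_refl _, ?_⟩
    intro h
    rw [h] at hS
    simp at hS
  have hgs := hall S hSD
  have hnA : ¬ S ⊆ A := fun h => by have := h hbS; simp [hA, hab.symm] at this
  have hnB : ¬ S ⊆ B := fun h => by have := h ha; simp [hB, hab] at this
  have hnC : ¬ S ⊆ C := fun h => by have := h ha; simp [hC] at this
  have hnAC : ¬ S ⊆ A ∪ C := fun h => by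
    have := h hbS; simp [hA, hC, hab.symm] at this
  have hnBC : ¬ S ⊆ B ∪ C := fun h => by
    have := h ha; simp [hB, hC, hab] at this
  have hnAB : ¬ S ⊆ A ∪ B := fun h => by
    have hcard := Finset.card_le_card h
    have : (A ∪ B).card ≤ 2 := by
      calc (A ∪ B).card ≤ A.card + B.card := Finset.card_union_le A B
        _ = 2 := by simp [hA, hB]
    omega
  simp [hnA, hnB, hnC, hnAB, hnAC, hnBC] at hgs
  exact hgs
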